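/- The multipliers of the Neville elimination of the reverse Bessel coefficient matrix C are m_{ij} = 2i − 1 − 2j for 1 ≤ j < i ≤ n when j is odd, and m_{ij} = 0 when j is even. -/

import Mathlib

/-- Entries of the lower triangular reverse Bessel coefficient matrix. -/
noncomputable def revC (i j : ℕ) : ℝ :=
  if j ≤ i then ((2 * i - j - 1).factorial : ℝ) / (2 ^ (i - j) * (j - 1).factorial * (i - j).factorial)
  else 0

/-- `revNE k i j` is the `(i,j)` entry of `C^{(k+1)}`, the matrix obtained after `k`
steps of Neville elimination of the reverse Bessel coefficient matrix. -/
noncomputable def revNE : ℕ → ℕ → ℕ → ℝ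
  | 0, i, j => revC i j
  | k + 1, i, j =>
      if k + 1 ≤ j ∧ j < i ∧ revNE k (i - 1) (k + 1) ≠ 0 then
        revNE k i j - revNE k i (k + 1) / revNE k (i - 1) (k + 1) * revNE k (i - 1) j
      else revNE k i j

noncomputable def revF (r i j : ℕ) : ℝ :=
  if j ≤ 2*r then (if i = j then (1:ℝ) else 0) else revC (i - 2*r) (j - 2*r)

lemma revC_one (a : ℕ) : revC (a+1) 1 = ((2*a).factorial : ℝ)/(2^a * a.factorial) := by
  rw [revC, if_pos (by omega)]
  rw [show 2*(a+1) - 1 - 1 = 2*a by omega, show a+1-1 = a from rfl]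
  norm_num [Nat.factorial]

lemma revC_one_pos (a : ℕ) : 0 < revC (a+1) 1 := by
  rw [revC_one]
  positivity

lemma revC_one_step (a : ℕ) : revC (a+2) 1 = (2*a+1) * revC (a+1) 1 := by
  rw [revC_one, revC_one, show a+1 = a+1 from rfl]
  rw [show 2*(a+1) = (2*a+1)+1 by omega, Nat.factorial_succ,
      show 2*a+1 = (2*a)+1 from rfl, Nat.factorial_succ, Nat.factorial_succ]
  have h1 : ((2*a).factorial : ℝ) ≠ 0 := Nat.cast_ne_zero.2 (Nat.factorial_ne_zero _)
  have h2 : (a.factorial : ℝ) ≠ 0 := Nat.cast_ne_zero.2 (Nat.factorial_ne_zero _)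
  have h3 : (2:ℝ)^a ≠ 0 := by positivity
  field_simp
  push_cast
  ring

lemma revC_two (a : ℕ) : revC (a+2) 2 = revC (a+2) 1 := by
  rw [revC, if_pos (by omega), revC_one (a+1)]
  rw [show 2*(a+2) - 2 - 1 = (2*a)+1 by omega, show a+2-2 = a by omega,
      show 2-1 = 1 from rfl, show 2*(a+1) = (2*a)+1+1 by omega,
      Nat.factorial_succ ((2*a)+1), Nat.factorial_one]
  have h1 : (((2*a)+1).factorial : ℝ) ≠ 0 := Nat.cast_ne_zero.2 (Nat.factorial_ne_zero _)
  have h2 : (a.factorial : ℝ) ≠ 0 := Nat.cast_ne_zero.2 (Nat.factorial_ne_zero _)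
  have h4 : ((a+1).factorial : ℝ) ≠ 0 := Nat.cast_ne_zero.2 (Nat.factorial_ne_zero _)
  have h3 : (2:ℝ)^a ≠ 0 := by positivity
  rw [Nat.factorial_succ a]
  push_cast
  field_simp
  ring

lemma revC_key (c s : ℕ) :
    revC (c+s+4) (c+3) = (2*c+2*s+5) * revC (c+s+3) (c+3) + revC (c+s+2) (c+1) := by
  rw [revC, if_pos (by omega), revC, if_pos (by omega), revC, if_pos (by omega)]
  rw [show 2*(c+s+4) - (c+3) - 1 = (c+2*s+2)+1+1 by omega,
      show (c+s+4) - (c+3) = s+1 by omega,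
      show (c+3) - 1 = c+1+1 from rfl,
      show 2*(c+s+3) - (c+3) - 1 = c+2*s+2 by omega,
      show (c+s+3) - (c+3) = s by omega,
      show 2*(c+s+2) - (c+1) - 1 = c+2*s+2 by omega,
      show (c+s+2) - (c+1) = s+1 by omega,
      show (c+1) - 1 = c from rfl]
  rw [Nat.factorial_succ ((c+2*s+2)+1), Nat.factorial_succ (c+2*s+2),
      Nat.factorial_succ (c+1), Nat.factorial_succ c,
      Nat.factorial_succ s, pow_succ]
  have h1 : ((c+2*s+2).factorial : ℝ) ≠ 0 := Nat.cast_ne_zero.2 (Nat.factorial_ne_zero _)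
  have h2 : (c.factorial : ℝ) ≠ 0 := Nat.cast_ne_zero.2 (Nat.factorial_ne_zero _)
  have h3 : (s.factorial : ℝ) ≠ 0 := Nat.cast_ne_zero.2 (Nat.factorial_ne_zero _)
  have h4 : (2:ℝ)^s ≠ 0 := by positivity
  push_cast
  field_simp
  ring

lemma revC_diag (c : ℕ) : revC (c+1) (c+1) = 1 := by
  rw [revC, if_pos le_rfl, show 2*(c+1) - (c+1) - 1 = c by omega,
      show (c+1) - (c+1) = 0 by omega, show (c+1) - 1 = c from rfl]
  simp [Nat.factorial_ne_zero]

lemma revC_zero_of_lt {i j : ℕ} (h : i < j) : revC i j = 0 := by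
  rw [revC, if_neg (by omega)]

lemma revF_diag (r j : ℕ) (hj : 1 ≤ j) : revF r j j = 1 := by
  rw [revF]
  by_cases h : j ≤ 2*r
  · rw [if_pos h, if_pos rfl]
  · rw [if_neg h]
    obtain ⟨c, hc⟩ : ∃ c, j - 2*r = c + 1 := ⟨j - 2*r - 1, by omega⟩
    rw [hc, revC_diag]

lemma revF_zero_of_lt {r i j : ℕ} (hj : 1 ≤ j) (h : i < j) : revF r i j = 0 := by
  rw [revF]
  by_cases h2 : j ≤ 2*r
  · rw [if_pos h2, if_neg (by omega)]
  · rw [if_neg h2]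
    exact revC_zero_of_lt (by omega)

lemma master (k : ℕ) : ∀ i j, 1 ≤ j → revNE k i j = revF ((k+1)/2) i j := by
  induction k with
  | zero =>
    intro i j hj
    rw [show (0+1)/2 = 0 by norm_num, revNE, revF, if_neg (by omega)]
    norm_num
  | succ k IH =>
    intro i j hj
    rw [revNE]
    rcases Nat.even_or_odd k with ⟨r, hr⟩ | ⟨r, hr⟩
    · -- k = 2r even
      have hk : k = 2*r := by omega
      have hd1 : (k+1)/2 = r := by omega
      have hd2 : (k+1+1)/2 = r+1 := by omega
      rw [hd2]
      split_ifs with h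
      · obtain ⟨h1, h2, h3⟩ := h
        rw [IH i j hj, IH i (k+1) (by omega), IH (i-1) (k+1) (by omega), IH (i-1) j hj, hd1]
        obtain ⟨b, hb⟩ : ∃ b, j = 2*r + 1 + b := ⟨j - (2*r+1), by omega⟩
        obtain ⟨t, ht⟩ : ∃ t, i = j + 1 + t := ⟨i - (j+1), by omega⟩
        have hF1 : revF r i (k+1) = revC (b+t+2) 1 := by
          rw [revF, if_neg (by omega), show i - 2*r = b+t+2 by omega,
              show k+1 - 2*r = 1 by omega]
        have hF2 : revF r (i-1) (k+1) = revC (b+t+1) 1 := by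
          rw [revF, if_neg (by omega), show i-1 - 2*r = b+t+1 by omega,
              show k+1 - 2*r = 1 by omega]
        have hF3 : revF r i j = revC (b+t+2) (b+1) := by
          rw [revF, if_neg (by omega), show i - 2*r = b+t+2 by omega,
              show j - 2*r = b+1 by omega]
        have hF4 : revF r (i-1) j = revC (b+t+1) (b+1) := by
          rw [revF, if_neg (by omega), show i-1 - 2*r = b+t+1 by omega,
              show j - 2*r = b+1 by omega]
        have hpiv : revC (b+t+1) 1 ≠ 0 := by
          obtain ⟨u, hu⟩ : ∃ u, b+t+1 = u+1 := ⟨b+t, rfl⟩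
          rw [hu]; exact ne_of_gt (revC_one_pos u)
        rw [hF1, hF2, hF3, hF4]
        match b with
        | 0 =>
          rw [revF, if_pos (by omega), if_neg (by omega)]
          rw [show (0:ℕ)+t+2 = t+2 by omega, show (0:ℕ)+t+1 = t+1 by omega] at *
          rw [div_mul_cancel₀ _ hpiv]
          ring
        | 1 =>
          rw [revF, if_pos (by omega), if_neg (by omega)]
          rw [show (1:ℕ)+t+2 = t+1+2 by omega, show (1:ℕ)+t+1 = t+2 by omega,
              show (1:ℕ)+1 = 2 by omega] at *
          rw [revC_two, revC_two, show t+1+2 = t+2+1 by omega] at *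
          rw [div_mul_cancel₀ _ hpiv]
          ring
        | (c+2) =>
          rw [revF, if_neg (by omega), show i - 2*(r+1) = c+t+2 by omega,
              show j - 2*(r+1) = c+1 by omega]
          rw [show c+2+t+2 = c+t+4 by omega, show c+2+t+1 = c+t+3 by omega,
              show c+2+1 = c+3 by omega] at *
          have hs := revC_one_step (c+t+2)
          rw [show c+t+2+2 = c+t+4 by omega, show c+t+2+1 = c+t+3 by omega] at hs
          rw [hs, mul_div_assoc, div_self hpiv, mul_one, revC_key c t]
          push_cast
          ring
      · rw [IH i j hj, hd1]
        push_neg at h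
        by_cases hle : j ≤ 2*r
        · rw [revF, revF, if_pos hle, if_pos (show j ≤ 2*(r+1) by omega)]
        · have h1 : k + 1 ≤ j := by omega
          by_cases hji : j < i
          · exfalso
            have hpne : revNE k (i-1) (k+1) ≠ 0 := by
              rw [IH (i-1) (k+1) (by omega), hd1, revF,
                  if_neg (show ¬(k+1 ≤ 2*r) by omega),
                  show k+1-2*r = 1 by omega]
              obtain ⟨u, hu⟩ : ∃ u, i - 1 - 2*r = u+1 := ⟨i - 2 - 2*r, by omega⟩
              rw [hu]
              exact ne_of_gt (revC_one_pos u)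
            exact hpne (h h1 hji)
          · rcases eq_or_lt_of_le (not_lt.mp hji) with he | hlt
            · rw [he, revF_diag r j hj, revF_diag (r+1) j hj]
            · rw [revF_zero_of_lt hj hlt, revF_zero_of_lt hj hlt]
    · -- k = 2r+1 odd
      have hk : k = 2*r+1 := by omega
      have hd1 : (k+1)/2 = r+1 := by omega
      have hd2 : (k+1+1)/2 = r+1 := by omega
      rw [hd2]
      split_ifs with h
      · obtain ⟨h1, h2, h3⟩ := h
        rw [IH (i-1) (k+1) (by omega), hd1] at h3
        have hi1 : i - 1 = 2*r+2 := by
          by_contra hne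
          apply h3
          rcases lt_or_ge (i-1) (k+1) with hc | hc
          · exact revF_zero_of_lt (by omega) (by omega)
          · rw [revF, if_pos (by omega), if_neg (by omega)]
        have hnum : revNE k i (k+1) = 0 := by
          rw [IH i (k+1) (by omega), hd1, revF, if_pos (by omega), if_neg (by omega)]
        rw [hnum, IH i j hj, hd1]
        simp
      · rw [IH i j hj, hd1]

theorem revBessel_NE_multipliers (n : ℕ) :
    let p : ℕ → ℕ → ℝ := fun i j => revNE (j - 1) i j
    let m : ℕ → ℕ → ℝ := fun i j => if p (i - 1) j ≠ 0 then p i j / p (i - 1) j else 0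
    ∀ i j : ℕ, 1 ≤ j → j < i → i ≤ n →
      (Odd j → m i j = ((2 * i - 1 - 2 * j : ℕ) : ℝ)) ∧ (Even j → m i j = 0) := by
  intro p m i j hj hji hin
  have hp : ∀ i', p i' j = revF (j/2) i' j := by
    intro i'
    show revNE (j-1) i' j = _
    rw [master (j-1) i' j hj, show (j-1+1)/2 = j/2 by omega]
  constructor
  · rintro ⟨s, hs⟩
    obtain ⟨t, ht⟩ : ∃ t, i = j + 1 + t := ⟨i - (j+1), by omega⟩
    have hj2 : j/2 = s := by omega
    have h1 : p i j = revC (t+2) 1 := by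
      rw [hp, hj2, revF, if_neg (by omega), show i - 2*s = t+2 by omega,
          show j - 2*s = 1 by omega]
    have h2 : p (i-1) j = revC (t+1) 1 := by
      rw [hp, hj2, revF, if_neg (by omega), show i-1 - 2*s = t+1 by omega,
          show j - 2*s = 1 by omega]
    have hpiv : revC (t+1) 1 ≠ 0 := ne_of_gt (revC_one_pos t)
    show (if p (i-1) j ≠ 0 then p i j / p (i-1) j else 0) = _
    rw [if_pos (by rw [h2]; exact hpiv), h1, h2]
    have hs2 : revC (t+2) 1 = (2*t+1) * revC (t+1) 1 := revC_one_step t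
    rw [hs2, mul_div_assoc, div_self hpiv, mul_one, show 2*i - 1 - 2*j = 2*t+1 by omega]
    push_cast
    ring
  · rintro ⟨s, hs⟩
    have h1 : p i j = 0 := by
      rw [hp, revF, if_pos (by omega), if_neg (by omega)]
    show (if p (i-1) j ≠ 0 then p i j / p (i-1) j else 0) = 0
    split_ifs with h
    · rw [h1, zero_div]
    · rfl
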